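/- (Patch diffusion) Let k₁,…,k_J ∈ ℝ^a be pairwise orthogonal nonzero vectors with J = a, and define f̃(p, t) = (∏_j ‖k_j‖²) ∏_{j=1}^J Σ_{l=1}^L w_{jl} G_{μ_l, σ_j²(t)}(⟨k_j, p⟩) with σ_j²(t) = σ₀² + 2t‖k_j‖². Then f̃(·, t) satisfies the heat equation ∂_t f̃ = Δ_p f̃ on ℝ^a × (0, ∞). -/

import Mathlib

open Matrix Real Finset

/-- The one-dimensional Gaussian density. -/
noncomputable def gauss1 (μ σ2 x : ℝ) : ℝ :=
  (Real.sqrt (2 * Real.pi * σ2))⁻¹ * Real.exp (-(x - μ) ^ 2 / (2 * σ2))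

/-- Partial derivative in the `i`-th coordinate direction. -/
noncomputable def pderiv' {a : ℕ} (i : Fin a) (g : (Fin a → ℝ) → ℝ) (x : Fin a → ℝ) : ℝ :=
  fderiv ℝ g x (Pi.single i 1)

noncomputable def g1 (μ s x : ℝ) : ℝ := (-(x - μ) / s) * gauss1 μ s x

noncomputable def g2 (μ s x : ℝ) : ℝ := (((x - μ) ^ 2 - s) / s ^ 2) * gauss1 μ s x

lemma hasDerivAt_gauss1_x (μ s : ℝ) (hs : 0 < s) (x : ℝ) :
    HasDerivAt (fun x => gauss1 μ s x) (g1 μ s x) x := by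
  have h1 : HasDerivAt (fun x : ℝ => -(x - μ) ^ 2 / (2 * s)) (-(x - μ) / s) x := by
    have := (((hasDerivAt_id x).sub_const μ).pow 2).neg.div_const (2 * s)
    refine this.congr_deriv ?_
    simp only [id]
    field_simp
    ring
  have h2 := h1.exp
  have h3 := h2.const_mul (Real.sqrt (2 * Real.pi * s))⁻¹
  refine h3.congr_deriv ?_
  simp only [g1, gauss1]
  ring

lemma hasDerivAt_g1_x (μ s : ℝ) (hs : 0 < s) (x : ℝ) :
    HasDerivAt (fun x => g1 μ s x) (g2 μ s x) x := by
  have hlin : HasDerivAt (fun x : ℝ => -(x - μ) / s) (-1 / s) x := by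
    have := (((hasDerivAt_id x).sub_const μ).neg).div_const s
    simpa using this
  have := hlin.mul (hasDerivAt_gauss1_x μ s hs x)
  refine this.congr_deriv ?_
  simp only [g1, g2]
  field_simp
  ring

lemma hasDerivAt_gauss1_s (μ x s : ℝ) (hs : 0 < s) :
    HasDerivAt (fun s => gauss1 μ s x) (g2 μ s x / 2) s := by
  have h2πs : 0 < 2 * Real.pi * s := by positivity
  have hA : 0 < Real.sqrt (2 * Real.pi * s) := Real.sqrt_pos.mpr h2πs
  have hsqrt : HasDerivAt (fun s : ℝ => Real.sqrt (2 * Real.pi * s))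
      (Real.pi / Real.sqrt (2 * Real.pi * s)) s := by
    have hinner : HasDerivAt (fun s : ℝ => 2 * Real.pi * s) (2 * Real.pi) s := by
      simpa using (hasDerivAt_id s).const_mul (2 * Real.pi)
    have := (Real.hasDerivAt_sqrt h2πs.ne').comp s hinner
    refine this.congr_deriv ?_
    field_simp
  have hinv := hsqrt.inv hA.ne'
  have hexp : HasDerivAt (fun s : ℝ => Real.exp (-(x - μ) ^ 2 / (2 * s)))
      (Real.exp (-(x - μ) ^ 2 / (2 * s)) * ((x - μ) ^ 2 / (2 * s ^ 2))) s := by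
    have hinner : HasDerivAt (fun s : ℝ => -(x - μ) ^ 2 / (2 * s))
        ((x - μ) ^ 2 / (2 * s ^ 2)) s := by
      have heq : (fun s : ℝ => -(x - μ) ^ 2 / (2 * s)) = fun s : ℝ => (-(x - μ) ^ 2 / 2) * s⁻¹ := by
        funext s; ring
      rw [heq]
      have := (hasDerivAt_inv hs.ne').const_mul (-(x - μ) ^ 2 / 2)
      refine this.congr_deriv ?_
      field_simp
    exact hinner.exp
  have := hinv.mul hexp
  refine this.congr_deriv ?_
  simp only [g2, gauss1]
  have hA2 : Real.sqrt (2 * Real.pi * s) ^ 2 = 2 * Real.pi * s := Real.sq_sqrt h2πs.le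
  set A := Real.sqrt (2 * Real.pi * s) with hAdef
  set E := Real.exp (-(x - μ) ^ 2 / (2 * s)) with hEdef
  have key : -(Real.pi / A) / A ^ 2 = -(1 / (2 * s)) * A⁻¹ := by
    rw [neg_div, div_div]
    rw [show A * A ^ 2 = A * (2 * Real.pi * s) by rw [hA2]]
    field_simp
  rw [key]
  simp only [Pi.inv_apply, ← hAdef]
  field_simp
  ring

noncomputable def mixG {L : ℕ} (w μ : Fin L → ℝ) (s x : ℝ) : ℝ := ∑ l, w l * gauss1 (μ l) s x
noncomputable def mix1 {L : ℕ} (w μ : Fin L → ℝ) (s x : ℝ) : ℝ := ∑ l, w l * g1 (μ l) s x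
noncomputable def mix2 {L : ℕ} (w μ : Fin L → ℝ) (s x : ℝ) : ℝ := ∑ l, w l * g2 (μ l) s x

lemma hasDerivAt_mixG_x {L : ℕ} (w μ : Fin L → ℝ) {s : ℝ} (hs : 0 < s) (x : ℝ) :
    HasDerivAt (fun x => mixG w μ s x) (mix1 w μ s x) x :=
  HasDerivAt.fun_sum fun l _ => (hasDerivAt_gauss1_x (μ l) s hs x).const_mul (w l)

lemma hasDerivAt_mix1_x {L : ℕ} (w μ : Fin L → ℝ) {s : ℝ} (hs : 0 < s) (x : ℝ) :
    HasDerivAt (fun x => mix1 w μ s x) (mix2 w μ s x) x :=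
  HasDerivAt.fun_sum fun l _ => (hasDerivAt_g1_x (μ l) s hs x).const_mul (w l)

lemma hasDerivAt_mixG_s {L : ℕ} (w μ : Fin L → ℝ) {s : ℝ} (hs : 0 < s) (x : ℝ) :
    HasDerivAt (fun s => mixG w μ s x) (mix2 w μ s x / 2) s := by
  have := HasDerivAt.fun_sum (fun l (_ : l ∈ Finset.univ) =>
    (hasDerivAt_gauss1_s (μ l) x s hs).const_mul (w l))
  refine this.congr_deriv ?_
  simp only [mix2, Finset.sum_div]
  exact Finset.sum_congr rfl fun l _ => by ring

noncomputable def dotCLM {a : ℕ} (v : Fin a → ℝ) : (Fin a → ℝ) →L[ℝ] ℝ :=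
  ∑ i, v i • ContinuousLinearMap.proj i

lemma dotCLM_apply {a : ℕ} (v q : Fin a → ℝ) : dotCLM v q = v ⬝ᵥ q := by
  simp [dotCLM, dotProduct, ContinuousLinearMap.sum_apply]

lemma dotCLM_single {a : ℕ} (v : Fin a → ℝ) (i : Fin a) :
    dotCLM v (Pi.single i 1) = v i := by
  rw [dotCLM_apply]
  simp [dotProduct, Pi.single_apply, Finset.sum_ite_eq', mul_comm]

lemma hasFDerivAt_dot {a : ℕ} (v : Fin a → ℝ) (q : Fin a → ℝ) :
    HasFDerivAt (fun z => v ⬝ᵥ z) (dotCLM v) q := by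
  have h := (dotCLM v).hasFDerivAt (x := q)
  exact h.congr_of_eventuallyEq (Filter.Eventually.of_forall fun z => (dotCLM_apply v z).symm)

noncomputable def Wf {a L : ℕ} (k : Fin a → Fin a → ℝ) (w : Fin a → Fin L → ℝ)
    (μ : Fin L → ℝ) (σ₀ t : ℝ) (j : Fin a) (q : Fin a → ℝ) : ℝ :=
  mixG (w j) μ (σ₀ ^ 2 + 2 * t * (k j ⬝ᵥ k j)) (k j ⬝ᵥ q)

noncomputable def W1f {a L : ℕ} (k : Fin a → Fin a → ℝ) (w : Fin a → Fin L → ℝ)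
    (μ : Fin L → ℝ) (σ₀ t : ℝ) (j : Fin a) (q : Fin a → ℝ) : ℝ :=
  mix1 (w j) μ (σ₀ ^ 2 + 2 * t * (k j ⬝ᵥ k j)) (k j ⬝ᵥ q)

noncomputable def W2f {a L : ℕ} (k : Fin a → Fin a → ℝ) (w : Fin a → Fin L → ℝ)
    (μ : Fin L → ℝ) (σ₀ t : ℝ) (j : Fin a) (q : Fin a → ℝ) : ℝ :=
  mix2 (w j) μ (σ₀ ^ 2 + 2 * t * (k j ⬝ᵥ k j)) (k j ⬝ᵥ q)

lemma hasFDerivAt_Wf {a L : ℕ} {k : Fin a → Fin a → ℝ} {w : Fin a → Fin L → ℝ}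
    {μ : Fin L → ℝ} {σ₀ t : ℝ} {j : Fin a}
    (hs : 0 < σ₀ ^ 2 + 2 * t * (k j ⬝ᵥ k j)) (z : Fin a → ℝ) :
    HasFDerivAt (Wf k w μ σ₀ t j) (W1f k w μ σ₀ t j z • dotCLM (k j)) z :=
  (hasDerivAt_mixG_x (w j) μ hs (k j ⬝ᵥ z)).comp_hasFDerivAt z (hasFDerivAt_dot (k j) z)

lemma hasFDerivAt_W1f {a L : ℕ} {k : Fin a → Fin a → ℝ} {w : Fin a → Fin L → ℝ}
    {μ : Fin L → ℝ} {σ₀ t : ℝ} {j : Fin a}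
    (hs : 0 < σ₀ ^ 2 + 2 * t * (k j ⬝ᵥ k j)) (z : Fin a → ℝ) :
    HasFDerivAt (W1f k w μ σ₀ t j) (W2f k w μ σ₀ t j z • dotCLM (k j)) z :=
  (hasDerivAt_mix1_x (w j) μ hs (k j ⬝ᵥ z)).comp_hasFDerivAt z (hasFDerivAt_dot (k j) z)

lemma hasDerivAt_Wf_t {a L : ℕ} {k : Fin a → Fin a → ℝ} {w : Fin a → Fin L → ℝ}
    {μ : Fin L → ℝ} {σ₀ t : ℝ} {j : Fin a}
    (hs : 0 < σ₀ ^ 2 + 2 * t * (k j ⬝ᵥ k j)) (p : Fin a → ℝ) :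
    HasDerivAt (fun τ => Wf k w μ σ₀ τ j p)
      ((k j ⬝ᵥ k j) * W2f k w μ σ₀ t j p) t := by
  have haff : HasDerivAt (fun τ : ℝ => σ₀ ^ 2 + 2 * τ * (k j ⬝ᵥ k j))
      (2 * (k j ⬝ᵥ k j)) t := by
    have h1 : HasDerivAt (fun τ : ℝ => 2 * τ * (k j ⬝ᵥ k j)) (2 * (k j ⬝ᵥ k j)) t := by
      simpa using ((hasDerivAt_id t).const_mul 2).mul_const (k j ⬝ᵥ k j)
    simpa using h1.const_add (σ₀ ^ 2)
  have h2 : HasDerivAt (fun τ => Wf k w μ σ₀ τ j p)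
      (mix2 (w j) μ (σ₀ ^ 2 + 2 * t * (k j ⬝ᵥ k j)) (k j ⬝ᵥ p) / 2 * (2 * (k j ⬝ᵥ k j))) t :=
    HasDerivAt.comp (h₂ := fun s => mixG (w j) μ s (k j ⬝ᵥ p)) t (hasDerivAt_mixG_s (w j) μ hs (k j ⬝ᵥ p)) haff
  convert h2 using 1
  unfold W2f
  ring

/-- (Patch diffusion) For pairwise orthogonal nonzero `k₁,…,k_a`, the function
`f̃(p,t) = (∏_j ‖k_j‖²) ∏_j Σ_l w_{jl} G_{μ_l, σ₀² + 2t‖k_j‖²}(⟨k_j,p⟩)` satisfies the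
heat equation `∂_t f̃ = Δ_p f̃` on `ℝ^a × (0,∞)`. -/
theorem patch_diffusion (a L : ℕ)
    (k : Fin a → (Fin a → ℝ))
    (horth : ∀ i j, i ≠ j → k i ⬝ᵥ k j = 0)
    (hnz : ∀ j, k j ≠ 0)
    (σ₀ : ℝ) (hσ₀ : 0 < σ₀)
    (w : Fin a → Fin L → ℝ) (hw : ∀ j l, 0 ≤ w j l) (hwsum : ∀ j, ∑ l, w j l = 1)
    (μ : Fin L → ℝ)
    (f : (Fin a → ℝ) → ℝ → ℝ)
    (hf : ∀ p t, f p t = (∏ j, k j ⬝ᵥ k j) *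
      ∏ j, ∑ l, w j l * gauss1 (μ l) (σ₀ ^ 2 + 2 * t * (k j ⬝ᵥ k j)) (k j ⬝ᵥ p)) :
    ∀ (p : Fin a → ℝ) (t : ℝ), 0 < t →
      deriv (fun s => f p s) t
        = ∑ i : Fin a, pderiv' i (fun z => pderiv' i (fun q => f q t) z) p := by
  intro p t ht
  classical
  have hc : ∀ j, 0 < k j ⬝ᵥ k j := by
    intro j
    rcases (Finset.sum_nonneg fun i (_ : i ∈ Finset.univ) => mul_self_nonneg (k j i)).lt_or_eq
      with h | h
    · exact h
    · exact absurd (dotProduct_self_eq_zero.mp h.symm) (hnz j)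
  have hs : ∀ j, 0 < σ₀ ^ 2 + 2 * t * (k j ⬝ᵥ k j) := by
    intro j
    have h1 : (0:ℝ) < 2 * t := by linarith
    nlinarith [mul_pos h1 (hc j), sq_nonneg σ₀]
  set W := Wf k w μ σ₀ t with hWdef
  set W1 := W1f k w μ σ₀ t with hW1def
  set W2 := W2f k w μ σ₀ t with hW2def
  set C : ℝ := ∏ j, k j ⬝ᵥ k j with hCdef
  have hfeq : (fun q => f q t) = fun q => C * ∏ j, W j q := by
    funext q; rw [hf]; rfl
  have hteq : (fun τ => f p τ) = fun τ => C * ∏ j, Wf k w μ σ₀ τ j p := by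
    funext τ; rw [hf]; rfl
  -- time derivative
  have htime : HasDerivAt (fun τ => f p τ)
      (C * ∑ j, (∏ m ∈ Finset.univ.erase j, W m p) • ((k j ⬝ᵥ k j) * W2 j p)) t := by
    rw [hteq]
    exact (HasDerivAt.fun_finsetProd fun j _ => hasDerivAt_Wf_t (hs j) p).const_mul C
  -- space: first fderiv
  have h1 : ∀ z, HasFDerivAt (fun q => f q t)
      (C • ∑ j, (∏ m ∈ Finset.univ.erase j, W m z) • (W1 j z • dotCLM (k j))) z := by
    intro z
    rw [hfeq]
    exact (HasFDerivAt.finset_prod fun j _ => hasFDerivAt_Wf (hs j) z).const_mul C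
  have hpd1 : ∀ (i : Fin a) z, pderiv' i (fun q => f q t) z
      = C * ∑ j, (∏ m ∈ Finset.univ.erase j, W m z) * (W1 j z * k j i) := by
    intro i z
    show fderiv ℝ (fun q => f q t) z (Pi.single i 1) = _
    rw [(h1 z).fderiv]
    simp [ContinuousLinearMap.sum_apply, ContinuousLinearMap.smul_apply, dotCLM_single,
      smul_eq_mul, Finset.mul_sum]
  -- space: second fderiv
  have h2 : ∀ i : Fin a, HasFDerivAt
      (fun z => C * ∑ j, (∏ m ∈ Finset.univ.erase j, W m z) * (W1 j z * k j i))
      (C • ∑ j, ((∏ m ∈ Finset.univ.erase j, W m p) • ((k j i) • (W2 j p • dotCLM (k j)))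
          + (W1 j p * k j i) • ∑ m ∈ Finset.univ.erase j,
              (∏ n ∈ (Finset.univ.erase j).erase m, W n p) • (W1 m p • dotCLM (k m)))) p := by
    intro i
    refine HasFDerivAt.const_mul (HasFDerivAt.fun_sum fun j _ => ?_) C
    exact (HasFDerivAt.finset_prod fun m _ => hasFDerivAt_Wf (hs m) p).mul
      ((hasFDerivAt_W1f (hs j) p).mul_const (k j i))
  have hpd2 : ∀ i : Fin a, pderiv' i (fun z => pderiv' i (fun q => f q t) z) p
      = C * ∑ j, ((∏ m ∈ Finset.univ.erase j, W m p) * (k j i * (W2 j p * k j i))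
          + (W1 j p * k j i) * ∑ m ∈ Finset.univ.erase j,
              (∏ n ∈ (Finset.univ.erase j).erase m, W n p) * (W1 m p * k m i)) := by
    intro i
    have heq : (fun z => pderiv' i (fun q => f q t) z)
        = fun z => C * ∑ j, (∏ m ∈ Finset.univ.erase j, W m z) * (W1 j z * k j i) :=
      funext fun z => hpd1 i z
    rw [heq]
    show fderiv ℝ _ p (Pi.single i 1) = _
    rw [(h2 i).fderiv]
    simp [ContinuousLinearMap.sum_apply, ContinuousLinearMap.smul_apply,
      ContinuousLinearMap.add_apply, dotCLM_single, smul_eq_mul, Finset.mul_sum]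
  have hdot : ∀ j m : Fin a, ∑ i, k j i * k m i = k j ⬝ᵥ k m := fun j m => rfl
  have hR : ∑ i : Fin a, pderiv' i (fun z => pderiv' i (fun q => f q t) z) p
      = C * ∑ j, (∏ m ∈ Finset.univ.erase j, W m p) * ((k j ⬝ᵥ k j) * W2 j p) := by
    rw [Finset.sum_congr rfl fun i _ => hpd2 i, ← Finset.mul_sum]
    congr 1
    rw [Finset.sum_comm]
    refine Finset.sum_congr rfl fun j _ => ?_
    rw [Finset.sum_add_distrib]
    have hA : ∑ i : Fin a, (∏ m ∈ Finset.univ.erase j, W m p) * (k j i * (W2 j p * k j i))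
        = (∏ m ∈ Finset.univ.erase j, W m p) * ((k j ⬝ᵥ k j) * W2 j p) := by
      calc ∑ i : Fin a, (∏ m ∈ Finset.univ.erase j, W m p) * (k j i * (W2 j p * k j i))
          = ∑ i : Fin a, ((∏ m ∈ Finset.univ.erase j, W m p) * W2 j p) * (k j i * k j i) :=
            Finset.sum_congr rfl fun i _ => by ring
        _ = ((∏ m ∈ Finset.univ.erase j, W m p) * W2 j p) * ∑ i : Fin a, k j i * k j i :=
            (Finset.mul_sum _ _ _).symm
        _ = (∏ m ∈ Finset.univ.erase j, W m p) * ((k j ⬝ᵥ k j) * W2 j p) := by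
            rw [hdot j j]; ring
    have hB : ∑ i : Fin a, (W1 j p * k j i) * ∑ m ∈ Finset.univ.erase j,
        (∏ n ∈ (Finset.univ.erase j).erase m, W n p) * (W1 m p * k m i) = 0 := by
      calc ∑ i : Fin a, (W1 j p * k j i) * ∑ m ∈ Finset.univ.erase j,
            (∏ n ∈ (Finset.univ.erase j).erase m, W n p) * (W1 m p * k m i)
          = ∑ i : Fin a, ∑ m ∈ Finset.univ.erase j,
            (W1 j p * (∏ n ∈ (Finset.univ.erase j).erase m, W n p) * W1 m p) *
              (k j i * k m i) := by
            refine Finset.sum_congr rfl fun i _ => ?_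
            rw [Finset.mul_sum]
            exact Finset.sum_congr rfl fun m _ => by ring
        _ = ∑ m ∈ Finset.univ.erase j, ∑ i : Fin a,
            (W1 j p * (∏ n ∈ (Finset.univ.erase j).erase m, W n p) * W1 m p) *
              (k j i * k m i) := Finset.sum_comm
        _ = ∑ m ∈ Finset.univ.erase j,
            (W1 j p * (∏ n ∈ (Finset.univ.erase j).erase m, W n p) * W1 m p) *
              ∑ i : Fin a, k j i * k m i :=
            Finset.sum_congr rfl fun m _ => (Finset.mul_sum _ _ _).symm
        _ = 0 := by
            refine Finset.sum_eq_zero fun m hm => ?_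
            rw [hdot j m, horth j m (Ne.symm (Finset.ne_of_mem_erase hm)), mul_zero]
    rw [hA, hB, add_zero]
  rw [hR, htime.deriv]
  simp [smul_eq_mul]
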